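/- Let P ≥ 1 and Q ≥ 2 be integers and c > 0. Then lim_{ρ→∞} −ln( (1 − (2/Γ(Q))·(c/ρ)^{Q/2}·K_Q(2·√(c/ρ)))^P ) / ln ρ = P. -/

import Mathlib

open Filter

/-- The modified Bessel function of the second kind, via its integral representation
`K_ν(x) = ∫₀^∞ exp(−x cosh t) cosh(ν t) dt`. -/
noncomputable def besselK (ν x : ℝ) : ℝ :=
  ∫ t in Set.Ioi (0 : ℝ), Real.exp (-x * Real.cosh t) * Real.cosh (ν * t)

open MeasureTheory Real Set

namespace Stmt13

lemma integrableOn_pow_exp (n : ℕ) :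
    IntegrableOn (fun s : ℝ => s ^ n * Real.exp (-s)) (Ioi 0) := by
  have h := Real.GammaIntegral_convergent (s := (n : ℝ) + 1) (by positivity)
  refine h.congr_fun ?_ measurableSet_Ioi
  intro s hs
  simp only [add_sub_cancel_right, Real.rpow_natCast]
  ring

lemma image_plus (r : ℝ) (hr : 0 < r) :
    (fun t : ℝ => r * Real.exp t) '' Ioi 0 = Ioi r := by
  ext s
  constructor
  · rintro ⟨t, ht, rfl⟩
    have : 1 < Real.exp t := Real.one_lt_exp_iff.mpr ht
    simpa using (mul_lt_mul_of_pos_left this hr)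
  · intro hs
    refine ⟨Real.log (s / r), ?_, ?_⟩
    · have : 1 < s / r := (one_lt_div hr).mpr hs
      exact Real.log_pos this
    · simp only
      rw [Real.exp_log (div_pos (lt_trans hr hs) hr)]
      field_simp

lemma image_minus (r : ℝ) (hr : 0 < r) :
    (fun t : ℝ => r * Real.exp (-t)) '' Ioi 0 = Ioo 0 r := by
  ext s
  constructor
  · rintro ⟨t, ht, rfl⟩
    constructor
    · positivity
    · have h1 : Real.exp (-t) < 1 := Real.exp_lt_one_iff.mpr (by linarith [mem_Ioi.mp ht])
      simpa using (mul_lt_mul_of_pos_left h1 hr)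
  · rintro ⟨h0, h1⟩
    refine ⟨Real.log (r / s), ?_, ?_⟩
    · exact Real.log_pos ((one_lt_div h0).mpr h1)
    · simp only
      rw [← Real.log_inv, Real.exp_log (by positivity)]
      field_simp

end Stmt13

namespace Stmt13

lemma deriv_plus (r : ℝ) : ∀ t ∈ Ioi (0:ℝ),
    HasDerivWithinAt (fun t : ℝ => r * Real.exp t) (r * Real.exp t) (Ioi 0) t :=
  fun t _ => ((Real.hasDerivAt_exp t).const_mul r).hasDerivWithinAt

lemma deriv_minus (r : ℝ) : ∀ t ∈ Ioi (0:ℝ),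
    HasDerivWithinAt (fun t : ℝ => r * Real.exp (-t)) (-(r * Real.exp (-t))) (Ioi 0) t := by
  intro t _
  have h : HasDerivAt (fun t : ℝ => Real.exp (-t)) (-Real.exp (-t)) t := by
    exact ((Real.hasDerivAt_exp (-t)).comp t (hasDerivAt_neg t)).congr_deriv (by ring)
  simpa [mul_comm, mul_left_comm, mul_assoc] using (h.const_mul r).hasDerivWithinAt

lemma inj_plus (r : ℝ) (hr : 0 < r) : InjOn (fun t : ℝ => r * Real.exp t) (Ioi 0) :=
  fun a _ b _ h => Real.exp_injective (mul_left_cancel₀ (ne_of_gt hr) h)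

lemma inj_minus (r : ℝ) (hr : 0 < r) : InjOn (fun t : ℝ => r * Real.exp (-t)) (Ioi 0) :=
  fun a _ b _ h => neg_injective
    (Real.exp_injective (mul_left_cancel₀ (ne_of_gt hr) h))

lemma cov_plus (r : ℝ) (hr : 0 < r) (g : ℝ → ℝ) :
    (∫ s in Ioi r, g s) = ∫ t in Ioi (0:ℝ), (r * Real.exp t) * g (r * Real.exp t) := by
  rw [← image_plus r hr,
    integral_image_eq_integral_abs_deriv_smul measurableSet_Ioi (deriv_plus r) (inj_plus r hr)]
  refine setIntegral_congr_fun measurableSet_Ioi fun t ht => ?_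
  rw [abs_of_pos (by positivity), smul_eq_mul]

lemma cov_minus (r : ℝ) (hr : 0 < r) (g : ℝ → ℝ) :
    (∫ s in Ioo 0 r, g s) = ∫ t in Ioi (0:ℝ), (r * Real.exp (-t)) * g (r * Real.exp (-t)) := by
  rw [← image_minus r hr,
    integral_image_eq_integral_abs_deriv_smul measurableSet_Ioi (deriv_minus r) (inj_minus r hr)]
  refine setIntegral_congr_fun measurableSet_Ioi fun t ht => ?_
  rw [abs_neg, abs_of_pos (by positivity), smul_eq_mul]

lemma covInt_plus (r : ℝ) (hr : 0 < r) (g : ℝ → ℝ) (h : IntegrableOn g (Ioi r)) :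
    IntegrableOn (fun t => (r * Real.exp t) * g (r * Real.exp t)) (Ioi (0:ℝ)) := by
  have := (integrableOn_image_iff_integrableOn_abs_deriv_smul measurableSet_Ioi
    (deriv_plus r) (inj_plus r hr) g).mp (by rwa [image_plus r hr])
  refine this.congr_fun (fun t ht => ?_) measurableSet_Ioi
  beta_reduce
  rw [abs_of_pos (by positivity), smul_eq_mul]

lemma covInt_minus (r : ℝ) (hr : 0 < r) (g : ℝ → ℝ) (h : IntegrableOn g (Ioo 0 r)) :
    IntegrableOn (fun t => (r * Real.exp (-t)) * g (r * Real.exp (-t))) (Ioi (0:ℝ)) := by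
  have := (integrableOn_image_iff_integrableOn_abs_deriv_smul measurableSet_Ioi
    (deriv_minus r) (inj_minus r hr) g).mp (by rwa [image_minus r hr])
  refine this.congr_fun (fun t ht => ?_) measurableSet_Ioi
  beta_reduce
  rw [abs_neg, abs_of_pos (by positivity), smul_eq_mul]

end Stmt13

namespace Stmt13

lemma pt_plus (Q : ℕ) (hQ : 1 ≤ Q) (r : ℝ) (hr : 0 < r) (t : ℝ) :
    (r * Real.exp t) * ((r * Real.exp t) ^ (Q - 1) *
        Real.exp (-(r * Real.exp t) - r ^ 2 / (r * Real.exp t)))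
      = r ^ Q * (Real.exp (-(2 * r) * Real.cosh t) * Real.exp ((Q : ℝ) * t)) := by
  have hd : r ^ 2 / (r * Real.exp t) = r * Real.exp (-t) := by
    rw [Real.exp_neg]
    field_simp
  rw [hd, Real.cosh_eq,
    show -(2 * r) * ((Real.exp t + Real.exp (-t)) / 2) =
      -(r * Real.exp t) - r * Real.exp (-t) from by ring,
    show r ^ Q * (Real.exp (-(r * Real.exp t) - r * Real.exp (-t)) * Real.exp ((Q : ℝ) * t))
      = (r * Real.exp t) ^ Q * Real.exp (-(r * Real.exp t) - r * Real.exp (-t)) from by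
        rw [mul_pow, ← Real.exp_nat_mul]; ring,
    show (r * Real.exp t) ^ Q = (r * Real.exp t) ^ (Q - 1) * (r * Real.exp t) from by
      rw [← pow_succ, Nat.sub_add_cancel hQ]]
  ring

lemma pt_minus (Q : ℕ) (hQ : 1 ≤ Q) (r : ℝ) (hr : 0 < r) (t : ℝ) :
    (r * Real.exp (-t)) * ((r * Real.exp (-t)) ^ (Q - 1) *
        Real.exp (-(r * Real.exp (-t)) - r ^ 2 / (r * Real.exp (-t))))
      = r ^ Q * (Real.exp (-(2 * r) * Real.cosh t) * Real.exp (-((Q : ℝ) * t))) := by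
  have hd : r ^ 2 / (r * Real.exp (-t)) = r * Real.exp t := by
    rw [Real.exp_neg]
    field_simp
  rw [hd, Real.cosh_eq,
    show -(2 * r) * ((Real.exp t + Real.exp (-t)) / 2) =
      -(r * Real.exp (-t)) - r * Real.exp t from by ring,
    show r ^ Q * (Real.exp (-(r * Real.exp (-t)) - r * Real.exp t) * Real.exp (-((Q : ℝ) * t)))
      = (r * Real.exp (-t)) ^ Q * Real.exp (-(r * Real.exp (-t)) - r * Real.exp t) from by
        rw [mul_pow, show -((Q:ℝ) * t) = (Q:ℝ) * (-t) from by ring, ← Real.exp_nat_mul]; ring,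
    show (r * Real.exp (-t)) ^ Q = (r * Real.exp (-t)) ^ (Q - 1) * (r * Real.exp (-t)) from by
      rw [← pow_succ, Nat.sub_add_cancel hQ]]
  ring

end Stmt13

namespace Stmt13

lemma integrableOn_g (Q : ℕ) (r : ℝ) (hr : 0 < r) :
    IntegrableOn (fun s : ℝ => s ^ (Q - 1) * Real.exp (-s - r ^ 2 / s)) (Ioi 0) := by
  refine (integrableOn_pow_exp (Q - 1)).mono' ?_ ?_
  · exact ((measurable_id.pow_const _).mul ((measurable_id.neg.sub
      (measurable_const.div measurable_id)).exp)).aestronglyMeasurable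
  · refine (ae_restrict_iff' measurableSet_Ioi).mpr (ae_of_all _ fun s hs => ?_)
    have hs0 : (0:ℝ) < s := hs
    rw [Real.norm_eq_abs, abs_of_nonneg (by positivity)]
    have h1 : Real.exp (-s - r ^ 2 / s) ≤ Real.exp (-s) := Real.exp_le_exp.mpr (by
      have : 0 ≤ r ^ 2 / s := by positivity
      linarith)
    exact mul_le_mul_of_nonneg_left h1 (by positivity)

lemma key (Q : ℕ) (hQ : 1 ≤ Q) (r : ℝ) (hr : 0 < r) :
    (∫ s in Ioi (0:ℝ), s ^ (Q - 1) * Real.exp (-s - r ^ 2 / s))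
      = 2 * r ^ Q * besselK Q (2 * r) := by
  set g : ℝ → ℝ := fun s => s ^ (Q - 1) * Real.exp (-s - r ^ 2 / s) with hgdef
  have hIg : IntegrableOn g (Ioi 0) := integrableOn_g Q r hr
  have hIoo : IntegrableOn g (Ioo 0 r) := hIg.mono_set Ioo_subset_Ioi_self
  have hIci : IntegrableOn g (Ici r) := hIg.mono_set (fun x hx => lt_of_lt_of_le hr hx)
  have hIoi : IntegrableOn g (Ioi r) := hIg.mono_set (Ioi_subset_Ioi hr.le)
  have hsplit : (∫ s in Ioi (0:ℝ), g s) = (∫ s in Ioo 0 r, g s) + ∫ s in Ioi r, g s := by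
    rw [← Ioo_union_Ici_eq_Ioi hr, setIntegral_union ?_ measurableSet_Ici hIoo hIci,
      integral_Ici_eq_integral_Ioi]
    exact Set.disjoint_left.mpr fun x hx1 hx2 => absurd hx2 (not_le.mpr hx1.2)
  have hplus : (∫ s in Ioi r, g s)
      = r ^ Q * ∫ t in Ioi (0:ℝ), Real.exp (-(2*r) * Real.cosh t) * Real.exp ((Q:ℝ)*t) := by
    rw [cov_plus r hr g, ← integral_const_mul]
    exact setIntegral_congr_fun measurableSet_Ioi fun t _ => pt_plus Q hQ r hr t
  have hminus : (∫ s in Ioo 0 r, g s)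
      = r ^ Q * ∫ t in Ioi (0:ℝ), Real.exp (-(2*r) * Real.cosh t) * Real.exp (-((Q:ℝ)*t)) := by
    rw [cov_minus r hr g, ← integral_const_mul]
    exact setIntegral_congr_fun measurableSet_Ioi fun t _ => pt_minus Q hQ r hr t
  have hrQ : IsUnit (r ^ Q) := isUnit_iff_ne_zero.mpr (pow_ne_zero Q hr.ne')
  have hFplus : IntegrableOn
      (fun t => Real.exp (-(2*r) * Real.cosh t) * Real.exp ((Q:ℝ)*t)) (Ioi 0) := by
    have h1 := covInt_plus r hr g hIoi
    have h2 : IntegrableOn (fun t => r ^ Q *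
        (Real.exp (-(2*r) * Real.cosh t) * Real.exp ((Q:ℝ)*t))) (Ioi 0) :=
      h1.congr_fun (fun t _ => pt_plus Q hQ r hr t) measurableSet_Ioi
    exact (integrable_const_mul_iff hrQ _).mp h2
  have hFminus : IntegrableOn
      (fun t => Real.exp (-(2*r) * Real.cosh t) * Real.exp (-((Q:ℝ)*t))) (Ioi 0) := by
    have h1 := covInt_minus r hr g hIoo
    have h2 : IntegrableOn (fun t => r ^ Q *
        (Real.exp (-(2*r) * Real.cosh t) * Real.exp (-((Q:ℝ)*t)))) (Ioi 0) :=
      h1.congr_fun (fun t _ => pt_minus Q hQ r hr t) measurableSet_Ioi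
    exact (integrable_const_mul_iff hrQ _).mp h2
  rw [hsplit, hplus, hminus, besselK]
  rw [show (2:ℝ) * r ^ Q * ∫ t in Ioi (0:ℝ),
        Real.exp (-(2*r) * Real.cosh t) * Real.cosh ((Q:ℝ)*t)
      = r ^ Q * ∫ t in Ioi (0:ℝ),
        2 * (Real.exp (-(2*r) * Real.cosh t) * Real.cosh ((Q:ℝ)*t)) from by
    rw [integral_const_mul]; ring]
  rw [← mul_add, ← integral_add hFminus hFplus]
  congr 1
  refine setIntegral_congr_fun measurableSet_Ioi fun t _ => ?_
  rw [Real.cosh_eq ((Q:ℝ)*t)]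
  ring

end Stmt13

namespace Stmt13

lemma chord (u : ℝ) (hu0 : 0 ≤ u) (hu1 : u ≤ 1) :
    (1 - Real.exp (-1)) * u ≤ 1 - Real.exp (-u) := by
  have h := convexOn_exp.2 (mem_univ (0:ℝ)) (mem_univ (-1:ℝ))
    (by linarith : (0:ℝ) ≤ 1 - u) hu0 (by ring)
  simp only [smul_eq_mul, mul_zero, mul_neg, mul_one, zero_add, Real.exp_zero] at h
  nlinarith [h]

lemma one_sub_exp_le (u : ℝ) : 1 - Real.exp (-u) ≤ u := by
  nlinarith [Real.add_one_le_exp (-u)]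

lemma exp_le_one_of_nonneg (u : ℝ) (hu : 0 ≤ u) : Real.exp (-u) ≤ 1 := by
  rw [Real.exp_le_one_iff]; linarith

lemma integrableOn_D (Q : ℕ) (ξ : ℝ) (hξ : 0 ≤ ξ) :
    IntegrableOn (fun s : ℝ => s ^ (Q - 1) * Real.exp (-s) * (1 - Real.exp (-(ξ/s))))
      (Ioi 0) := by
  refine (integrableOn_pow_exp (Q - 1)).mono' ?_ ?_
  · exact (((measurable_id.pow_const _).mul measurable_id.neg.exp).mul
      (measurable_const.sub (measurable_const.div measurable_id).neg.exp)).aestronglyMeasurable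
  · refine (ae_restrict_iff' measurableSet_Ioi).mpr (ae_of_all _ fun s hs => ?_)
    have hs0 : (0:ℝ) < s := hs
    rw [Real.norm_eq_abs, abs_mul]
    have h2 : |1 - Real.exp (-(ξ/s))| ≤ 1 := by
      rw [abs_le]
      constructor
      · have := exp_le_one_of_nonneg (ξ/s) (by positivity)
        linarith
      · nlinarith [Real.exp_pos (-(ξ/s))]
    calc |s ^ (Q-1) * Real.exp (-s)| * |1 - Real.exp (-(ξ/s))|
        ≤ |s ^ (Q-1) * Real.exp (-s)| * 1 :=
          mul_le_mul_of_nonneg_left h2 (abs_nonneg _)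
      _ = s ^ (Q-1) * Real.exp (-s) := by
          rw [mul_one, abs_of_nonneg (by positivity)]

lemma D_repr (Q : ℕ) (hQ : 1 ≤ Q) (ξ : ℝ) (hξ : 0 < ξ) :
    Real.Gamma Q - (∫ s in Ioi (0:ℝ), s ^ (Q - 1) * Real.exp (-s - ξ / s))
      = ∫ s in Ioi (0:ℝ), s ^ (Q - 1) * Real.exp (-s) * (1 - Real.exp (-(ξ/s))) := by
  have hG : Real.Gamma (Q:ℝ) = ∫ s in Ioi (0:ℝ), s ^ (Q - 1) * Real.exp (-s) := by
    rw [Real.Gamma_eq_integral (by positivity : (0:ℝ) < (Q:ℝ))]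
    refine setIntegral_congr_fun measurableSet_Ioi fun s hs => ?_
    have hs0 : (0:ℝ) < s := hs
    rw [show (Q:ℝ) - 1 = ((Q - 1 : ℕ) : ℝ) from by
      rw [Nat.cast_sub hQ]; norm_num, Real.rpow_natCast]
    ring
  have hIgξ : IntegrableOn (fun s : ℝ => s ^ (Q - 1) * Real.exp (-s - ξ / s)) (Ioi 0) := by
    have := integrableOn_g Q (Real.sqrt ξ) (Real.sqrt_pos.mpr hξ)
    rwa [Real.sq_sqrt hξ.le] at this
  rw [hG, ← integral_sub (integrableOn_pow_exp (Q-1)) hIgξ]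
  refine setIntegral_congr_fun measurableSet_Ioi fun s hs => ?_
  have : Real.exp (-s - ξ/s) = Real.exp (-s) * Real.exp (-(ξ/s)) := by
    rw [← Real.exp_add]; ring_nf
  rw [this]; ring

lemma D_le (Q : ℕ) (hQ : 2 ≤ Q) (ξ : ℝ) (hξ : 0 < ξ) :
    (∫ s in Ioi (0:ℝ), s ^ (Q - 1) * Real.exp (-s) * (1 - Real.exp (-(ξ/s))))
      ≤ ξ * ∫ s in Ioi (0:ℝ), s ^ (Q - 2) * Real.exp (-s) := by
  rw [← integral_const_mul]
  refine setIntegral_mono_on (integrableOn_D Q ξ hξ.le)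
    ((integrableOn_pow_exp (Q-2)).const_mul ξ) measurableSet_Ioi fun s hs => ?_
  have hs0 : (0:ℝ) < s := hs
  have h1 : 1 - Real.exp (-(ξ/s)) ≤ ξ/s := one_sub_exp_le _
  have hpow : s ^ (Q - 1) = s ^ (Q - 2) * s := by
    rw [← pow_succ]
    congr 1
    omega
  calc s ^ (Q-1) * Real.exp (-s) * (1 - Real.exp (-(ξ/s)))
      ≤ s ^ (Q-1) * Real.exp (-s) * (ξ/s) :=
        mul_le_mul_of_nonneg_left h1 (by positivity)
    _ = ξ * (s ^ (Q-2) * Real.exp (-s)) := by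
        rw [hpow]; field_simp

lemma D_ge (Q : ℕ) (ξ : ℝ) (hξ : 0 < ξ) (hξ1 : ξ ≤ 1) :
    Real.exp (-2) * (1 - Real.exp (-1)) / 2 * ξ
      ≤ ∫ s in Ioi (0:ℝ), s ^ (Q - 1) * Real.exp (-s) * (1 - Real.exp (-(ξ/s))) := by
  have hnonneg : ∀ s ∈ Ioi (0:ℝ),
      0 ≤ s ^ (Q - 1) * Real.exp (-s) * (1 - Real.exp (-(ξ/s))) := by
    intro s hs
    have hs0 : (0:ℝ) < s := hs
    have : Real.exp (-(ξ/s)) ≤ 1 := exp_le_one_of_nonneg _ (by positivity)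
    have h2 : 0 ≤ 1 - Real.exp (-(ξ/s)) := by linarith
    positivity
  have hsub : (∫ s in Ioo (1:ℝ) 2, s ^ (Q - 1) * Real.exp (-s) * (1 - Real.exp (-(ξ/s))))
      ≤ ∫ s in Ioi (0:ℝ), s ^ (Q - 1) * Real.exp (-s) * (1 - Real.exp (-(ξ/s))) := by
    refine setIntegral_mono_set (integrableOn_D Q ξ hξ.le) ?_ ?_
    · exact (ae_restrict_iff' measurableSet_Ioi).mpr (ae_of_all _ hnonneg)
    · refine HasSubset.Subset.eventuallyLE fun x hx => ?_
      exact lt_trans one_pos hx.1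
  refine le_trans ?_ hsub
  have hconst : Real.exp (-2) * (1 - Real.exp (-1)) / 2 * ξ
      = ∫ _ in Ioo (1:ℝ) 2, Real.exp (-2) * (1 - Real.exp (-1)) / 2 * ξ := by
    rw [setIntegral_const, Real.volume_real_Ioo]
    norm_num
  rw [hconst]
  refine setIntegral_mono_on (integrableOn_const ?_)
    ((integrableOn_D Q ξ hξ.le).mono_set fun x hx => lt_trans one_pos hx.1)
    measurableSet_Ioo fun s hs => ?_
  · rw [Real.volume_Ioo]; exact ENNReal.ofReal_ne_top
  · obtain ⟨hs1, hs2⟩ := hs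
    have hs0 : (0:ℝ) < s := lt_trans one_pos hs1
    have hu0 : 0 ≤ ξ/s := by positivity
    have hu1 : ξ/s ≤ 1 := by
      rw [div_le_one hs0]; linarith
    have hch := chord (ξ/s) hu0 hu1
    have hdiv : ξ/2 ≤ ξ/s := by
      apply div_le_div_of_nonneg_left hξ.le hs0; linarith
    have he : Real.exp (-2) ≤ Real.exp (-s) := Real.exp_le_exp.mpr (by linarith)
    have hp : (1:ℝ) ≤ s ^ (Q-1) := one_le_pow₀ hs1.le
    have he1 : (0:ℝ) < 1 - Real.exp (-1) := by
      have : Real.exp (-1) < 1 := Real.exp_lt_one_iff.mpr (by norm_num)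
      linarith
    calc Real.exp (-2) * (1 - Real.exp (-1)) / 2 * ξ
        = Real.exp (-2) * ((1 - Real.exp (-1)) * (ξ/2)) := by ring
      _ ≤ Real.exp (-s) * ((1 - Real.exp (-1)) * (ξ/s)) := by
          refine mul_le_mul he (mul_le_mul_of_nonneg_left hdiv he1.le) (by positivity)
            (Real.exp_nonneg _)
      _ ≤ Real.exp (-s) * (1 - Real.exp (-(ξ/s))) :=
          mul_le_mul_of_nonneg_left hch (Real.exp_nonneg _)
      _ ≤ s ^ (Q-1) * (Real.exp (-s) * (1 - Real.exp (-(ξ/s)))) := by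
          refine le_mul_of_one_le_left ?_ hp
          have h2 := exp_le_one_of_nonneg (ξ/s) hu0
          have := Real.exp_nonneg (-s)
          nlinarith
      _ = s ^ (Q-1) * Real.exp (-s) * (1 - Real.exp (-(ξ/s))) := by ring

end Stmt13

namespace Stmt13

lemma f_bounds (Q : ℕ) (hQ : 2 ≤ Q) (ξ : ℝ) (hξ : 0 < ξ) (hξ1 : ξ ≤ 1) :
    Real.exp (-2) * (1 - Real.exp (-1)) / 2 / Real.Gamma Q * ξ
      ≤ 1 - (2 / Real.Gamma Q) * ξ ^ ((Q : ℝ) / 2) * besselK Q (2 * Real.sqrt ξ)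
    ∧ 1 - (2 / Real.Gamma Q) * ξ ^ ((Q : ℝ) / 2) * besselK Q (2 * Real.sqrt ξ)
      ≤ (∫ s in Ioi (0:ℝ), s ^ (Q - 2) * Real.exp (-s)) / Real.Gamma Q * ξ := by
  have hΓ : 0 < Real.Gamma (Q:ℝ) := Real.Gamma_pos_of_pos (by positivity)
  have hr : 0 < Real.sqrt ξ := Real.sqrt_pos.mpr hξ
  have hpow : ξ ^ ((Q:ℝ)/2) = Real.sqrt ξ ^ Q := by
    rw [← Real.rpow_natCast (Real.sqrt ξ) Q, Real.sqrt_eq_rpow, ← Real.rpow_mul hξ.le]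
    congr 1
    ring
  have hkey := key Q (by omega) (Real.sqrt ξ) hr
  rw [Real.sq_sqrt hξ.le] at hkey
  have hf : 1 - (2 / Real.Gamma Q) * ξ ^ ((Q:ℝ)/2) * besselK Q (2 * Real.sqrt ξ)
      = (Real.Gamma Q - ∫ s in Ioi (0:ℝ), s ^ (Q - 1) * Real.exp (-s - ξ / s))
        / Real.Gamma Q := by
    rw [hpow, hkey]
    field_simp
  rw [hf, D_repr Q (by omega) ξ hξ]
  constructor
  · rw [show Real.exp (-2) * (1 - Real.exp (-1)) / 2 / Real.Gamma Q * ξ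
        = Real.exp (-2) * (1 - Real.exp (-1)) / 2 * ξ / Real.Gamma Q from by ring]
    exact div_le_div_of_nonneg_right (D_ge Q ξ hξ hξ1) hΓ.le |>.trans_eq rfl
  · rw [show (∫ s in Ioi (0:ℝ), s ^ (Q - 2) * Real.exp (-s)) / Real.Gamma Q * ξ
        = ξ * (∫ s in Ioi (0:ℝ), s ^ (Q - 2) * Real.exp (-s)) / Real.Gamma Q from by ring]
    exact div_le_div_of_nonneg_right (D_le Q hQ ξ hξ) hΓ.le

end Stmt13


theorem stmt_13 (P Q : ℕ) (hP : 1 ≤ P) (hQ : 2 ≤ Q) (c : ℝ) (hc : 0 < c) :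
    Tendsto
      (fun ρ : ℝ =>
        -Real.log
            ((1 - (2 / Real.Gamma Q) * (c / ρ) ^ ((Q : ℝ) / 2) *
              besselK Q (2 * Real.sqrt (c / ρ))) ^ P) /
          Real.log ρ)
      atTop (nhds P) := by
  classical
  have hΓ : 0 < Real.Gamma (Q:ℝ) := Real.Gamma_pos_of_pos (by positivity)
  set f : ℝ → ℝ := fun ρ => 1 - (2 / Real.Gamma Q) * (c / ρ) ^ ((Q : ℝ) / 2) *
      besselK Q (2 * Real.sqrt (c / ρ)) with hfdef
  have h1 : Real.exp (-1) < 1 := Real.exp_lt_one_iff.mpr (by norm_num)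
  set m : ℝ := Real.exp (-2) * (1 - Real.exp (-1)) / 2 / Real.Gamma Q with hm
  set Cq : ℝ := (∫ s in Set.Ioi (0:ℝ), s ^ (Q - 2) * Real.exp (-s)) / Real.Gamma Q with hCq
  have hm0 : 0 < m :=
    div_pos (div_pos (mul_pos (Real.exp_pos _) (by linarith)) two_pos) hΓ
  have hCq0 : 0 ≤ Cq := by
    refine div_nonneg ?_ hΓ.le
    refine MeasureTheory.setIntegral_nonneg measurableSet_Ioi fun s hs => ?_
    have : (0:ℝ) < s := hs
    positivity
  set A : ℝ := m * c with hA
  set B : ℝ := Cq * c + A with hB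
  have hA0 : 0 < A := mul_pos hm0 hc
  have hB0 : 0 < B := by
    have : 0 ≤ Cq * c := mul_nonneg hCq0 hc.le
    linarith
  -- eventual two-sided bound
  have hev : ∀ᶠ ρ in atTop, A / ρ ≤ f ρ ∧ f ρ ≤ B / ρ ∧ 0 < Real.log ρ ∧ 0 < ρ := by
    filter_upwards [eventually_ge_atTop (max c 2)] with ρ hρ
    have hρc : c ≤ ρ := le_trans (le_max_left _ _) hρ
    have hρ2 : (2:ℝ) ≤ ρ := le_trans (le_max_right _ _) hρ
    have hρ0 : 0 < ρ := by linarith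
    have hξ : 0 < c / ρ := div_pos hc hρ0
    have hξ1 : c / ρ ≤ 1 := (div_le_one hρ0).mpr hρc
    obtain ⟨hlo, hhi⟩ := Stmt13.f_bounds Q hQ (c/ρ) hξ hξ1
    refine ⟨?_, ?_, Real.log_pos (by linarith), hρ0⟩
    · calc A / ρ = m * (c / ρ) := by rw [hA]; ring
        _ ≤ f ρ := hlo
    · calc f ρ ≤ Cq * (c / ρ) := hhi
        _ = Cq * c / ρ := by ring
        _ ≤ B / ρ := div_le_div_of_nonneg_right (by rw [hB]; linarith) hρ0.le
  -- squeeze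
  have hinv : Tendsto (fun ρ : ℝ => (Real.log ρ)⁻¹) atTop (nhds 0) :=
    Real.tendsto_log_atTop.inv_tendsto_atTop
  have hlo_t : Tendsto (fun ρ : ℝ => (P:ℝ) * (1 - Real.log B * (Real.log ρ)⁻¹))
      atTop (nhds P) := by
    have := ((hinv.const_mul (Real.log B)).const_sub 1).const_mul (P:ℝ)
    simpa using this
  have hhi_t : Tendsto (fun ρ : ℝ => (P:ℝ) * (1 - Real.log A * (Real.log ρ)⁻¹))
      atTop (nhds P) := by
    have := ((hinv.const_mul (Real.log A)).const_sub 1).const_mul (P:ℝ)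
    simpa using this
  refine tendsto_of_tendsto_of_tendsto_of_le_of_le' hlo_t hhi_t ?_ ?_
  · filter_upwards [hev] with ρ ⟨hlo, hhi, hlρ, hρ0⟩
    have hf0 : 0 < f ρ := lt_of_lt_of_le (by positivity) hlo
    have hlog : Real.log (f ρ) ≤ Real.log B - Real.log ρ := by
      have := Real.log_le_log hf0 hhi
      rwa [Real.log_div hB0.ne' hρ0.ne'] at this
    have e2 : -Real.log (f ρ ^ P) / Real.log ρ
        = (P:ℝ) * (-Real.log (f ρ) / Real.log ρ) := by
      rw [Real.log_pow]
      push_cast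
      ring
    rw [e2, show (P:ℝ) * (1 - Real.log B * (Real.log ρ)⁻¹)
        = (P:ℝ) * ((Real.log ρ - Real.log B) / Real.log ρ) from by
      field_simp]
    refine mul_le_mul_of_nonneg_left ?_ (Nat.cast_nonneg P)
    exact div_le_div_of_nonneg_right (by linarith) hlρ.le |>.trans_eq rfl
  · filter_upwards [hev] with ρ ⟨hlo, hhi, hlρ, hρ0⟩
    have hf0 : 0 < f ρ := lt_of_lt_of_le (by positivity) hlo
    have hlog : Real.log A - Real.log ρ ≤ Real.log (f ρ) := by
      have := Real.log_le_log (by positivity : 0 < A / ρ) hlo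
      rwa [Real.log_div hA0.ne' hρ0.ne'] at this
    have e2 : -Real.log (f ρ ^ P) / Real.log ρ
        = (P:ℝ) * (-Real.log (f ρ) / Real.log ρ) := by
      rw [Real.log_pow]
      push_cast
      ring
    rw [e2, show (P:ℝ) * (1 - Real.log A * (Real.log ρ)⁻¹)
        = (P:ℝ) * ((Real.log ρ - Real.log A) / Real.log ρ) from by
      field_simp]
    refine mul_le_mul_of_nonneg_left ?_ (Nat.cast_nonneg P)
    exact div_le_div_of_nonneg_right (by linarith) hlρ.le |>.trans_eq rfl
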